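/- The cartesian monoidal structure on polynomial functors is closed, with exponential given by the formula Q^A = ∏_{i ∈ I} (Q ∘ (aᵢ + –)): for any polynomial functor A = ∐_{i ∈ I} Fin(aᵢ, –) and any functors P, Q : FintypeCat ⥤ FintypeCat with Q polynomial, there is a bijection, natural in P, between natural transformations P × A ⟶ Q and natural transformations P ⟶ ∏_{i ∈ I} (Q ∘ (aᵢ + –)), where (aᵢ + –) : FintypeCat ⥤ FintypeCat sends X to the disjoint union aᵢ + X. -/

import Mathlib

/- STATEMENT 18: The cartesian monoidal structure on polynomial functors is closed, with
exponential `Q^A = ∏_{i ∈ I} (Q ∘ (aᵢ + –))`: for any polynomial functor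
`A = ∐_{i ∈ I} Fin(aᵢ, –)` and any functors `P, Q : FintypeCat ⥤ FintypeCat` with `Q`
polynomial, there is a bijection, natural in `P`, between natural transformations
`P × A ⟶ Q` and natural transformations `P ⟶ ∏_{i ∈ I} (Q ∘ (aᵢ + –))`. -/

open CategoryTheory CategoryTheory.Limits Opposite

noncomputable section

noncomputable instance (X Y : FintypeCat.{0}) : Fintype (X ⟶ Y) := by
  exact Fintype.ofFinite (X ⟶ Y)

/-- The finite coproduct `∐ᵢ Fin(kᵢ, –)` of corepresentable functors `FintypeCat ⥤ FintypeCat`. -/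
def polySum {I : Type} [Fintype I] (k : I → FintypeCat.{0}) :
    FintypeCat.{0} ⥤ FintypeCat.{0} where
  obj X := FintypeCat.of (Σ i, (k i ⟶ X))
  map f := FintypeCat.homMk fun x => ⟨x.1, x.2 ≫ f⟩

/-- A polynomial functor is a finite coproduct of corepresentables. -/
def IsPolynomial (P : FintypeCat.{0} ⥤ FintypeCat.{0}) : Prop :=
  ∃ (I : Type) (_ : Fintype I) (k : I → FintypeCat.{0}), Nonempty (P ≅ polySum k)

/-- The functor `a + – : FintypeCat ⥤ FintypeCat`, `X ↦ a ⊕ X`. -/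
def plusF (a : FintypeCat.{0}) : FintypeCat.{0} ⥤ FintypeCat.{0} where
  obj X := FintypeCat.of (a ⊕ X)
  map f := FintypeCat.homMk (Sum.map id f)
  map_id := by intro X; ext x; cases x <;> rfl
  map_comp := by intro X Y Z f g; ext x; cases x <;> rfl

namespace PolyCC

variable (P A : FintypeCat.{0} ⥤ FintypeCat.{0})

/-- pointwise product -/
def pw : FintypeCat.{0} ⥤ FintypeCat.{0} where
  obj X := FintypeCat.of (P.obj X × A.obj X)
  map f := FintypeCat.homMk fun z => (P.map f z.1, A.map f z.2)
  map_id X := by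
    apply FintypeCat.hom_ext; intro z
    show (P.map (𝟙 X) z.1, A.map (𝟙 X) z.2) = z
    rw [P.map_id, A.map_id]; rfl
  map_comp f g := by
    apply FintypeCat.hom_ext; intro z
    show (P.map (f ≫ g) z.1, A.map (f ≫ g) z.2) = _
    rw [P.map_comp, A.map_comp]; rfl

def pwFst : pw P A ⟶ P where
  app X := FintypeCat.homMk fun z => z.1

def pwSnd : pw P A ⟶ A where
  app X := FintypeCat.homMk fun z => z.2

def pwIsLimit : IsLimit (BinaryFan.mk (pwFst P A) (pwSnd P A)) :=
  BinaryFan.isLimitMk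
    (fun s => {
      app := fun X => FintypeCat.homMk fun x => (s.fst.app X x, s.snd.app X x)
      naturality := by
        intro X Y f
        apply FintypeCat.hom_ext; intro x
        show (s.fst.app Y (s.pt.map f x), s.snd.app Y (s.pt.map f x)) =
          (P.map f (s.fst.app X x), A.map f (s.snd.app X x))
        have h1 : s.fst.app Y (s.pt.map f x) = P.map f (s.fst.app X x) :=
          ConcreteCategory.congr_hom (s.fst.naturality f) x
        have h2 : s.snd.app Y (s.pt.map f x) = A.map f (s.snd.app X x) :=
          ConcreteCategory.congr_hom (s.snd.naturality f) x
        rw [h1, h2]; rfl })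
    (fun s => rfl) (fun s => rfl)
    (fun s m h1 h2 => by
      apply NatTrans.ext
      funext X; ext x
      have e1 := ConcreteCategory.congr_hom (congrFun (congrArg NatTrans.app h1) X) x
      have e2 := ConcreteCategory.congr_hom (congrFun (congrArg NatTrans.app h2) X) x
      exact Prod.ext e1 e2)

def pwIso : P ⨯ A ≅ pw P A :=
  limit.isoLimitCone ⟨_, pwIsLimit P A⟩

end PolyCC

namespace PolyCC

variable {I : Type} [Fintype I]

def sinl (b X : FintypeCat.{0}) : b ⟶ (plusF b).obj X := FintypeCat.homMk Sum.inl
def sinr (b X : FintypeCat.{0}) : X ⟶ (plusF b).obj X := FintypeCat.homMk Sum.inr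
def scase {b X : FintypeCat.{0}} (h : b ⟶ X) : (plusF b).obj X ⟶ X := FintypeCat.homMk (Sum.elim h id)

variable (P : FintypeCat.{0} ⥤ FintypeCat.{0}) (a : I → FintypeCat.{0})
  (Q : FintypeCat.{0} ⥤ FintypeCat.{0})

def toPi (f' : pw P (polySum a) ⟶ Q) (i : I) : P ⟶ plusF (a i) ⋙ Q where
  app X := FintypeCat.homMk fun p => f'.app ((plusF (a i)).obj X)
    (P.map (sinr (a i) X) p, ⟨i, sinl (a i) X⟩)
  naturality := by
    intro X Y f
    ext p
    show f'.app _ (P.map (sinr (a i) Y) (P.map f p), ⟨i, sinl (a i) Y⟩)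
      = Q.map ((plusF (a i)).map f)
          (f'.app _ (P.map (sinr (a i) X) p, ⟨i, sinl (a i) X⟩))
    have hnat : f'.app _ ((pw P (polySum a)).map ((plusF (a i)).map f)
          (P.map (sinr (a i) X) p, ⟨i, sinl (a i) X⟩))
        = Q.map ((plusF (a i)).map f)
            (f'.app _ (P.map (sinr (a i) X) p, ⟨i, sinl (a i) X⟩)) :=
      ConcreteCategory.congr_hom (f'.naturality ((plusF (a i)).map f)) _
    rw [← hnat]
    have e1 : sinr (a i) X ≫ (plusF (a i)).map f = f ≫ sinr (a i) Y := by
      ext x; rfl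
    have e2 : sinl (a i) X ≫ (plusF (a i)).map f = sinl (a i) Y := by
      ext x; rfl
    have e3 : P.map ((plusF (a i)).map f) (P.map (sinr (a i) X) p)
        = P.map (sinr (a i) Y) (P.map f p) := by
      have c1 : P.map ((plusF (a i)).map f) (P.map (sinr (a i) X) p)
          = P.map (sinr (a i) X ≫ (plusF (a i)).map f) p :=
        (ConcreteCategory.congr_hom (P.map_comp _ _) p).symm
      have c2 : P.map (sinr (a i) Y) (P.map f p) = P.map (f ≫ sinr (a i) Y) p :=
        (ConcreteCategory.congr_hom (P.map_comp _ _) p).symm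
      rw [c1, c2, e1]
    show f'.app _ (P.map (sinr (a i) Y) (P.map f p), ⟨i, sinl (a i) Y⟩)
      = f'.app _ (P.map ((plusF (a i)).map f) (P.map (sinr (a i) X) p),
          ⟨i, sinl (a i) X ≫ (plusF (a i)).map f⟩)
    rw [e3, e2]

def fromPi (g : P ⟶ ∏ᶜ fun i => plusF (a i) ⋙ Q) : pw P (polySum a) ⟶ Q where
  app X := FintypeCat.homMk fun z => Q.map (scase z.2.2)
    ((g ≫ Pi.π (fun i => plusF (a i) ⋙ Q) z.2.1).app X z.1)
  naturality := by
    intro X Y f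
    ext z
    obtain ⟨p, i, h⟩ := z
    show Q.map (scase (h ≫ f))
        ((g ≫ Pi.π (fun i => plusF (a i) ⋙ Q) i).app Y (P.map f p))
      = Q.map f (Q.map (scase h)
          ((g ≫ Pi.π (fun i => plusF (a i) ⋙ Q) i).app X p))
    set gi := g ≫ Pi.π (fun i => plusF (a i) ⋙ Q) i with hgi
    have hnat : gi.app Y (P.map f p)
        = Q.map ((plusF (a i)).map f) (gi.app X p) := ConcreteCategory.congr_hom (gi.naturality f) p
    have c1 : Q.map (scase (h ≫ f)) (Q.map ((plusF (a i)).map f) (gi.app X p))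
        = Q.map ((plusF (a i)).map f ≫ scase (h ≫ f)) (gi.app X p) :=
      (ConcreteCategory.congr_hom (Q.map_comp _ _) (gi.app X p)).symm
    have c2 : Q.map f (Q.map (scase h) (gi.app X p))
        = Q.map (scase h ≫ f) (gi.app X p) :=
      (ConcreteCategory.congr_hom (Q.map_comp _ _) (gi.app X p)).symm
    have emor : (plusF (a i)).map f ≫ scase (h ≫ f) = scase h ≫ f := by
      ext x; cases x <;> rfl
    rw [hnat, c1, c2, emor]

lemma key1 (f' : pw P (polySum a) ⟶ Q) :
    fromPi P a Q (Pi.lift fun i => toPi P a Q f' i) = f' := by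
  apply NatTrans.ext
  funext X; ext z
  obtain ⟨p, i, h⟩ := z
  show Q.map (scase h)
      ((Pi.lift (fun j => toPi P a Q f' j) ≫ Pi.π (fun j => plusF (a j) ⋙ Q) i).app X p)
    = f'.app X (p, ⟨i, h⟩)
  rw [Pi.lift_π]
  show Q.map (scase h)
      (f'.app ((plusF (a i)).obj X) (P.map (sinr (a i) X) p, ⟨i, sinl (a i) X⟩))
    = f'.app X (p, ⟨i, h⟩)
  have hnat : f'.app X ((pw P (polySum a)).map (scase h)
        (P.map (sinr (a i) X) p, ⟨i, sinl (a i) X⟩))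
      = Q.map (scase h)
          (f'.app _ (P.map (sinr (a i) X) p, ⟨i, sinl (a i) X⟩)) :=
    ConcreteCategory.congr_hom (f'.naturality (scase h)) _
  rw [← hnat]
  show f'.app X (P.map (scase h) (P.map (sinr (a i) X) p), ⟨i, sinl (a i) X ≫ scase h⟩)
    = f'.app X (p, ⟨i, h⟩)
  have e1 : sinr (a i) X ≫ scase h = 𝟙 X := by ext x; rfl
  have e2 : sinl (a i) X ≫ scase h = h := by ext x; rfl
  have c1 : P.map (scase h) (P.map (sinr (a i) X) p)
      = P.map (sinr (a i) X ≫ scase h) p := (ConcreteCategory.congr_hom (P.map_comp _ _) p).symm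
  rw [c1, e1, e2, ConcreteCategory.congr_hom (P.map_id X) p]
  rfl

lemma key2 (g : P ⟶ ∏ᶜ fun i => plusF (a i) ⋙ Q) (i : I) :
    toPi P a Q (fromPi P a Q g) i = g ≫ Pi.π (fun i => plusF (a i) ⋙ Q) i := by
  apply NatTrans.ext
  funext X; ext p
  set gi := g ≫ Pi.π (fun i => plusF (a i) ⋙ Q) i with hgi
  show Q.map (scase (sinl (a i) X)) (gi.app ((plusF (a i)).obj X) (P.map (sinr (a i) X) p))
    = gi.app X p
  have hnat : gi.app _ (P.map (sinr (a i) X) p)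
      = Q.map ((plusF (a i)).map (sinr (a i) X)) (gi.app X p) :=
    ConcreteCategory.congr_hom (gi.naturality (sinr (a i) X)) p
  have c1 : Q.map (scase (sinl (a i) X)) (Q.map ((plusF (a i)).map (sinr (a i) X)) (gi.app X p))
      = Q.map ((plusF (a i)).map (sinr (a i) X) ≫ scase (sinl (a i) X)) (gi.app X p) :=
    (ConcreteCategory.congr_hom (Q.map_comp _ _) (gi.app X p)).symm
  have emor : (plusF (a i)).map (sinr (a i) X) ≫ scase (sinl (a i) X)
      = 𝟙 ((plusF (a i)).obj X) := by ext x; cases x <;> rfl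
  rw [hnat, c1, emor, ConcreteCategory.congr_hom (Q.map_id _) (gi.app X p)]
  rfl

def pwMap {P' : FintypeCat.{0} ⥤ FintypeCat.{0}} (A : FintypeCat.{0} ⥤ FintypeCat.{0})
    (σ : P' ⟶ P) : pw P' A ⟶ pw P A where
  app X := FintypeCat.homMk fun z => (σ.app X z.1, z.2)
  naturality := by
    intro X Y f
    ext z
    show (σ.app Y (P'.map f z.1), A.map f z.2) = (P.map f (σ.app X z.1), A.map f z.2)
    have c1 : σ.app Y (P'.map f z.1) = P.map f (σ.app X z.1) :=
      ConcreteCategory.congr_hom (σ.naturality f) z.1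
    rw [c1]

lemma pwIso_inv_fst (A : FintypeCat.{0} ⥤ FintypeCat.{0}) :
    (pwIso P A).inv ≫ prod.fst = pwFst P A :=
  limit.isoLimitCone_inv_π (⟨_, pwIsLimit P A⟩ : LimitCone (pair P A))
    ⟨WalkingPair.left⟩

lemma pwIso_inv_snd (A : FintypeCat.{0} ⥤ FintypeCat.{0}) :
    (pwIso P A).inv ≫ prod.snd = pwSnd P A :=
  limit.isoLimitCone_inv_π (⟨_, pwIsLimit P A⟩ : LimitCone (pair P A))
    ⟨WalkingPair.right⟩

lemma pwIso_natural {P' : FintypeCat.{0} ⥤ FintypeCat.{0}}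
    (A : FintypeCat.{0} ⥤ FintypeCat.{0}) (σ : P' ⟶ P) :
    (pwIso P' A).inv ≫ prod.map σ (𝟙 A) = pwMap P A σ ≫ (pwIso P A).inv := by
  apply Limits.prod.hom_ext
  · rw [Category.assoc, prod.map_fst, Category.assoc, pwIso_inv_fst, ← Category.assoc,
      pwIso_inv_fst]
    rfl
  · rw [Category.assoc, prod.map_snd, Category.assoc, pwIso_inv_snd, Category.comp_id,
      pwIso_inv_snd]
    rfl

lemma toPi_pwMap {P' : FintypeCat.{0} ⥤ FintypeCat.{0}} (σ : P' ⟶ P)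
    (f' : pw P (polySum a) ⟶ Q) (i : I) :
    toPi P' a Q (pwMap P (polySum a) σ ≫ f') i = σ ≫ toPi P a Q f' i := by
  apply NatTrans.ext
  funext X; ext p
  show f'.app _ (σ.app _ (P'.map (sinr (a i) X) p), ⟨i, sinl (a i) X⟩)
    = f'.app _ (P.map (sinr (a i) X) (σ.app X p), ⟨i, sinl (a i) X⟩)
  have c1 : σ.app ((plusF (a i)).obj X) (P'.map (sinr (a i) X) p)
      = P.map (sinr (a i) X) (σ.app X p) :=
    ConcreteCategory.congr_hom (σ.naturality (sinr (a i) X)) p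
  rw [c1]

end PolyCC

open PolyCC in
theorem poly_cartesian_closed_aux
    {I : Type} [Fintype I] (a : I → FintypeCat.{0})
    (Q : FintypeCat.{0} ⥤ FintypeCat.{0}) :
    ∃ e : ∀ P : FintypeCat.{0} ⥤ FintypeCat.{0},
        (P ⨯ polySum a ⟶ Q) ≃ (P ⟶ ∏ᶜ fun i => plusF (a i) ⋙ Q),
      ∀ (P P' : FintypeCat.{0} ⥤ FintypeCat.{0}) (σ : P' ⟶ P) (f : P ⨯ polySum a ⟶ Q),
        e P' (prod.map σ (𝟙 (polySum a)) ≫ f) = σ ≫ e P f := by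
  refine ⟨fun P =>
    { toFun := fun f => Pi.lift fun i => toPi P a Q ((pwIso P (polySum a)).inv ≫ f) i
      invFun := fun g => (pwIso P (polySum a)).hom ≫ fromPi P a Q g
      left_inv := ?_
      right_inv := ?_ }, ?_⟩
  · intro f
    show (pwIso P (polySum a)).hom ≫ fromPi P a Q
        (Pi.lift fun i => toPi P a Q ((pwIso P (polySum a)).inv ≫ f) i) = f
    rw [key1, Iso.hom_inv_id_assoc]
  · intro g
    show (Pi.lift fun i => toPi P a Q
        ((pwIso P (polySum a)).inv ≫ (pwIso P (polySum a)).hom ≫ fromPi P a Q g) i) = g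
    apply Pi.hom_ext
    intro i
    rw [Pi.lift_π, Iso.inv_hom_id_assoc, key2]
  · intro P P' σ f
    apply Pi.hom_ext
    intro i
    show (Pi.lift fun i => toPi P' a Q
          ((pwIso P' (polySum a)).inv ≫ prod.map σ (𝟙 (polySum a)) ≫ f) i)
        ≫ Pi.π (fun i => plusF (a i) ⋙ Q) i
      = (σ ≫ Pi.lift fun i => toPi P a Q ((pwIso P (polySum a)).inv ≫ f) i)
        ≫ Pi.π (fun i => plusF (a i) ⋙ Q) i
    have harg : (pwIso P' (polySum a)).inv ≫ prod.map σ (𝟙 (polySum a)) ≫ f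
        = pwMap P (polySum a) σ ≫ (pwIso P (polySum a)).inv ≫ f := by
      rw [← Category.assoc, pwIso_natural, Category.assoc]
    rw [Pi.lift_π, Category.assoc, Pi.lift_π, harg, toPi_pwMap]


theorem poly_cartesian_closed
    {I : Type} [Fintype I] (a : I → FintypeCat.{0})
    (Q : FintypeCat.{0} ⥤ FintypeCat.{0}) (hQ : IsPolynomial Q) :
    ∃ e : ∀ P : FintypeCat.{0} ⥤ FintypeCat.{0},
        (P ⨯ polySum a ⟶ Q) ≃ (P ⟶ ∏ᶜ fun i => plusF (a i) ⋙ Q),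
      -- naturality in `P`
      ∀ (P P' : FintypeCat.{0} ⥤ FintypeCat.{0}) (σ : P' ⟶ P) (f : P ⨯ polySum a ⟶ Q),
        e P' (prod.map σ (𝟙 (polySum a)) ≫ f) = σ ≫ e P f :=
  poly_cartesian_closed_aux a Q
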